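/- arXiv:1303.3395 — 3 statements merged into one kernel-verified Lean document; each statement's English description precedes it below -/
import Mathlib

section
/- Let $\alpha > -1$, $q > 1$, and $u \in C^{2,1}(\Omega \times (0,T))$ be a nonnegative classical solution of $\partial_t u - \Delta u + t^\alpha u^q = 0$ in $\Omega \times (0,T)$, where $\Omega \subset \mathbb{R}^N$ is open, such that $u$ is continuous up to the parabolic boundary and vanishes on $\partial\Omega \times [0,T)$. Then $u(x,t) \le c_\alpha t^{-(\alpha+1)/(q-1)}$ for all $(x,t) \in \Omega \times (0,T)$, where $c_\alpha = \left(\frac{\alpha+1}{q-1}\right)^{1/(q-1)}$. -/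
open Set

set_option maxHeartbeats 2000000

open Filter Topology

section helpers

lemma deriv_nonneg_of_max_right {W : ℝ → ℝ} {a t D : ℝ} (hat : a < t)
    (hmax : ∀ s ∈ Set.Icc a t, W s ≤ W t) (hD : HasDerivAt W D t) : 0 ≤ D := by
  have hslope : Tendsto (slope W t) (𝓝[<] t) (𝓝 D) :=
    (hasDerivAt_iff_tendsto_slope.mp hD).mono_left
      (nhdsWithin_mono _ fun s hs => ne_of_lt hs)
  refine ge_of_tendsto hslope ?_
  filter_upwards [Ioo_mem_nhdsLT_of_mem ⟨hat, le_refl t⟩] with s hs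
  have h1 : W s ≤ W t := hmax s ⟨hs.1.le, hs.2.le⟩
  have h2 : s < t := hs.2
  have hsl : slope W t s = (W t - W s) / (t - s) := by
    rw [slope_comm]; simp [slope_def_field]
  rw [hsl]
  exact div_nonneg (by linarith) (by linarith)

lemma second_deriv_test {h h1 : ℝ → ℝ} {d : ℝ} (hmax : IsLocalMax h 0)
    (hh : ∀ᶠ s in 𝓝 (0:ℝ), HasDerivAt h (h1 s) s) (hd : HasDerivAt h1 d 0) : d ≤ 0 := by
  by_contra hpos
  push_neg at hpos
  have h10 : h1 0 = 0 := by
    have hzz := hmax.deriv_eq_zero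
    rwa [hh.self_of_nhds.deriv] at hzz
  have hslope : Tendsto (slope h1 0) (𝓝[≠] 0) (𝓝 d) := hasDerivAt_iff_tendsto_slope.mp hd
  have hev : ∀ᶠ s in 𝓝[≠] (0:ℝ), 0 < slope h1 0 s :=
    hslope.eventually (eventually_gt_nhds hpos)
  obtain ⟨δ1, hδ1, H1⟩ := Metric.eventually_nhds_iff.mp (hh.and hmax)
  obtain ⟨δ2, hδ2, H2⟩ := Metric.mem_nhdsWithin_iff.mp hev
  set δ := min δ1 δ2 with hδdef
  have hδ : 0 < δ := lt_min hδ1 hδ2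
  have hpos1 : ∀ s ∈ Set.Ioo (0:ℝ) δ, 0 < h1 s := by
    intro s hs
    have hsne : s ≠ 0 := ne_of_gt hs.1
    have hd2 : dist s (0:ℝ) < δ2 := by
      rw [Real.dist_eq, sub_zero, abs_of_pos hs.1]; exact hs.2.trans_le (min_le_right _ _)
    have := H2 ⟨Metric.mem_ball.mpr hd2, hsne⟩
    have hsl : slope h1 0 s = h1 s / s := by simp [slope_def_field, h10]
    simp only [Set.mem_setOf_eq, hsl] at this
    have := (div_pos_iff.mp this).resolve_right (fun hc => absurd hs.1 (not_lt.mpr hc.2.le))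
    exact this.1
  have hmem : ∀ s ∈ Set.Icc (0:ℝ) (δ/2), dist s (0:ℝ) < δ1 := by
    intro s hs
    rw [Real.dist_eq, sub_zero, abs_of_nonneg hs.1]
    calc s ≤ δ/2 := hs.2
    _ < δ := by linarith
    _ ≤ δ1 := min_le_left _ _
  have hcont : ContinuousOn h (Set.Icc 0 (δ/2)) := fun s hs =>
    ((H1 (hmem s hs)).1.continuousAt).continuousWithinAt
  have hderiv : ∀ s ∈ interior (Set.Icc (0:ℝ) (δ/2)), 0 < deriv h s := by
    intro s hs
    rw [interior_Icc] at hs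
    rw [(H1 (hmem s ⟨hs.1.le, hs.2.le⟩)).1.deriv]
    exact hpos1 s ⟨hs.1, by linarith [hs.2]⟩
  have hsm := strictMonoOn_of_deriv_pos (convex_Icc 0 (δ/2)) hcont hderiv
  have hlt : h 0 < h (δ/2) :=
    hsm (Set.left_mem_Icc.mpr (by linarith)) (Set.right_mem_Icc.mpr (by linarith)) (by linarith)
  have : h (δ/2) ≤ h 0 := (H1 (hmem (δ/2) ⟨by linarith, le_refl _⟩)).2
  linarith

lemma rpow_add_le_add_rpow {a b p : ℝ} (ha : 0 ≤ a) (hb : 0 ≤ b) (hp : 1 ≤ p) :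
    a ^ p + b ^ p ≤ (a + b) ^ p := by
  have key := NNReal.add_rpow_le_rpow_add a.toNNReal b.toNNReal hp
  have h2 : ((a.toNNReal ^ p + b.toNNReal ^ p : NNReal) : ℝ) ≤
      (((a.toNNReal + b.toNNReal) ^ p : NNReal) : ℝ) := by exact_mod_cast key
  simpa [NNReal.coe_rpow, NNReal.coe_add, Real.coe_toNNReal a ha, Real.coe_toNNReal b hb]
    using h2

lemma dir_second_deriv {E : Type*} [NormedAddCommGroup E] [NormedSpace ℝ E]
    {f : E → ℝ} {x : E} (hf : ContDiffAt ℝ 2 f x) (v : E) :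
    ∃ g1 : ℝ → ℝ, (∀ᶠ s in 𝓝 (0:ℝ), HasDerivAt (fun r => f (x + r • v)) (g1 s) s) ∧
      HasDerivAt g1 (iteratedFDeriv ℝ 2 f x ![v, v]) 0 := by
  have hline : ∀ s : ℝ, HasDerivAt (fun r : ℝ => x + r • v) v s := by
    intro s
    simpa using ((hasDerivAt_id s).smul_const v).const_add x
  refine ⟨fun s => (fderiv ℝ f (x + s • v)) v, ?_, ?_⟩
  · have hev : ∀ᶠ y in 𝓝 x, ContDiffAt ℝ 2 f y := hf.eventually (by norm_num)
    have hmap : Tendsto (fun s : ℝ => x + s • v) (𝓝 0) (𝓝 x) := by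
      have h := (hline 0).continuousAt.tendsto
      simpa using h
    filter_upwards [hmap.eventually hev] with s hs
    exact (hs.differentiableAt two_ne_zero).hasFDerivAt.comp_hasDerivAt s (hline s)
  · have hdf : DifferentiableAt ℝ (fderiv ℝ f) x :=
      (hf.fderiv_right (le_refl 2)).differentiableAt one_ne_zero
    have h0 : HasDerivAt (fun s : ℝ => fderiv ℝ f (x + s • v)) (fderiv ℝ (fderiv ℝ f) x v) 0 :=
      hdf.hasFDerivAt.comp_hasDerivAt_of_eq 0 (hline 0) (by simp)
    have hfin := h0.clm_apply (hasDerivAt_const 0 v)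
    simp only [map_zero, add_zero] at hfin
    have heq : iteratedFDeriv ℝ 2 f x ![v, v] = fderiv ℝ (fderiv ℝ f) x v v := by
      rw [iteratedFDeriv_two_apply]; simp
    rw [heq]
    convert hfin using 2

end helpers

/-- The Laplacian of `f : ℝ^N → ℝ` as the sum of second derivatives in coordinate directions. -/
noncomputable def lap {N : ℕ} (f : EuclideanSpace ℝ (Fin N) → ℝ)
    (x : EuclideanSpace ℝ (Fin N)) : ℝ :=
  ∑ i : Fin N, iteratedFDeriv ℝ 2 f x ![EuclideanSpace.single i 1, EuclideanSpace.single i 1]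

/-- A nonnegative classical solution of `∂ₜu - Δu + t^α u^q = 0` in `Ω × (0,T)` that is
continuous up to the parabolic boundary and vanishes on `∂Ω × [0,T)` satisfies
`u(x,t) ≤ c_α t^(-(α+1)/(q-1))`. -/
theorem universal_upper_bound
    (N : ℕ) (α q T : ℝ) (hα : -1 < α) (hq : 1 < q) (hT : 0 < T)
    (Ω : Set (EuclideanSpace ℝ (Fin N))) (hΩ : IsOpen Ω)
    (u : EuclideanSpace ℝ (Fin N) → ℝ → ℝ)
    (hcont : ContinuousOn (fun p : EuclideanSpace ℝ (Fin N) × ℝ => u p.1 p.2)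
      (closure Ω ×ˢ Set.Ico 0 T))
    (hnonneg : ∀ x ∈ Ω, ∀ t ∈ Set.Ioo (0 : ℝ) T, 0 ≤ u x t)
    (hsmooth : ∀ x ∈ Ω, ∀ t ∈ Set.Ioo (0 : ℝ) T,
      DifferentiableAt ℝ (u x) t ∧ ContDiffAt ℝ 2 (fun y => u y t) x)
    (hsol : ∀ x ∈ Ω, ∀ t ∈ Set.Ioo (0 : ℝ) T,
      deriv (u x) t - lap (fun y => u y t) x + t ^ α * u x t ^ q = 0)
    (hbdry : ∀ x ∈ frontier Ω, ∀ t ∈ Set.Ico (0 : ℝ) T, u x t = 0) :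
    ∀ x ∈ Ω, ∀ t ∈ Set.Ioo (0 : ℝ) T,
      u x t ≤ ((α + 1) / (q - 1)) ^ (1 / (q - 1)) * t ^ (-(α + 1) / (q - 1)) := by
  intro x0 hx0 t0 ht0
  obtain ⟨ht0pos, ht0T⟩ := ht0
  have hq1 : (0:ℝ) < q - 1 := by linarith
  have hα1 : (0:ℝ) < α + 1 := by linarith
  set gp : ℝ := 1/(q-1) with hgp_def
  have hgp : 0 < gp := by positivity
  have hgp1 : gp * (q-1) = 1 := by rw [hgp_def]; field_simp
  set γ : ℝ := 2/(q-1) with hγ_def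
  have hγ : 0 < γ := by positivity
  have hγq : γ * q = γ + 2 := by rw [hγ_def]; field_simp; ring
  set κ : ℝ := (q-1)/(α+1) with hκ_def
  have hκ : 0 < κ := by positivity
  set C : ℝ := 2*N*γ + 4*γ*(γ+1) with hC_def
  have hC : 0 < C := by positivity
  have claim : ∀ t1 : ℝ, 0 < t1 → t1 < t0 → ∀ R : ℝ, 0 < R → ∀ ε : ℝ, 0 < ε →
      u x0 t0 ≤ (κ * (t0 ^ (α+1) - t1 ^ (α+1))) ^ (-gp)
        + ((C * R^2 / min (t1 ^ α) (t0 ^ α)) ^ gp) * (R^2) ^ (-γ) + ε * (t0 - t1) := by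
    intro t1 ht1pos ht1t0 R hR ε hε
    by_contra hcon
    push_neg at hcon
    set m : ℝ := min (t1 ^ α) (t0 ^ α) with hm_def
    have hm : 0 < m := lt_min (Real.rpow_pos_of_pos ht1pos α) (Real.rpow_pos_of_pos ht0pos α)
    set A : ℝ := (C * R^2 / m) ^ gp with hA_def
    have hCR : (0:ℝ) < C * R^2 / m := by positivity
    have hA : 0 < A := Real.rpow_pos_of_pos hCR _
    have hApow : A ^ (q-1) = C * R^2 / m := by
      rw [hA_def, ← Real.rpow_mul hCR.le, hgp1, Real.rpow_one]
    set F : ℝ → ℝ := fun t => κ * (t ^ (α+1) - t1 ^ (α+1)) with hF_def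
    set ψ : ℝ → ℝ := fun t => F t ^ (-gp) with hψ_def
    have hFF : ∀ t, F t = κ * (t ^ (α+1) - t1 ^ (α+1)) := fun t => by rw [hF_def]
    have hψψ : ∀ t, ψ t = F t ^ (-gp) := fun t => by rw [hψ_def]
    have hFpos : ∀ t, t1 < t → 0 < F t := by
      intro t ht
      rw [hFF]
      exact mul_pos hκ (sub_pos.mpr (Real.rpow_lt_rpow ht1pos.le ht hα1))
    have hψpos : ∀ t, t1 < t → 0 < ψ t := by
      intro t ht
      rw [hψψ]
      exact Real.rpow_pos_of_pos (hFpos t ht) _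
    have hψq : ∀ t, t1 < t → ψ t ^ q = F t ^ (-gp - 1) := by
      intro t ht
      rw [hψψ, ← Real.rpow_mul (hFpos t ht).le]
      congr 1
      linear_combination (-1 : ℝ) * hgp1
    have hψd : ∀ t, t1 < t → HasDerivAt ψ (-(t ^ α * ψ t ^ q)) t := by
      intro t ht
      have htpos : 0 < t := ht1pos.trans ht
      have h1 : HasDerivAt (fun s : ℝ => s ^ (α+1)) ((α+1) * t ^ α) t := by
        have h := Real.hasDerivAt_rpow_const (x := t) (p := α+1) (Or.inl (ne_of_gt htpos))
        convert h using 1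
        rw [show α + 1 - 1 = α by ring]
      have h2 : HasDerivAt F (κ * ((α+1) * t ^ α)) t := by
        rw [hF_def]
        exact (h1.sub_const _).const_mul κ
      have h3 := h2.rpow_const (p := -gp) (Or.inl (ne_of_gt (hFpos t ht)))
      have hfun : ψ = fun t => F t ^ (-gp) := hψ_def
      rw [hfun]
      convert h3 using 1
      rw [hψq t ht]
      have hk1 : κ * (α+1) * gp = 1 := by rw [hκ_def, hgp_def]; field_simp
      linear_combination (t ^ α * F t ^ (-gp - 1)) * hk1
    set Q : EuclideanSpace ℝ (Fin N) → ℝ := fun y => ∑ j, (y j - x0 j)^2 with hQ_def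
    have hQQ : ∀ y, Q y = ∑ j, (y j - x0 j)^2 := fun y => by rw [hQ_def]
    have hQcont : Continuous Q := by
      rw [hQ_def]
      exact continuous_finset_sum _ fun j _ =>
        (((EuclideanSpace.proj j).continuous.sub continuous_const).pow 2)
    have hQnonneg : ∀ y, 0 ≤ Q y := by
      intro y; rw [hQQ]; exact Finset.sum_nonneg fun j _ => sq_nonneg _
    have hQ0 : Q x0 = 0 := by rw [hQQ]; simp
    set U : EuclideanSpace ℝ (Fin N) → ℝ := fun y => A * (R^2 - Q y) ^ (-γ) with hU_def
    have hUU : ∀ y, U y = A * (R^2 - Q y) ^ (-γ) := fun y => by rw [hU_def]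
    set w : EuclideanSpace ℝ (Fin N) → ℝ → ℝ :=
      fun y t => u y t - ψ t - U y - ε * (t - t1) with hw_def
    have hww : ∀ y t, w y t = u y t - ψ t - U y - ε * (t - t1) := fun y t => by rw [hw_def]
    have hw0 : 0 < w x0 t0 := by
      have hU0 : U x0 = A * (R^2) ^ (-γ) := by rw [hUU, hQ0, sub_zero]
      have hψ0 : ψ t0 = (κ * (t0 ^ (α+1) - t1 ^ (α+1))) ^ (-gp) := by rw [hψψ, hFF]
      rw [hww, hU0, hψ0]
      linarith only [hcon]
    -- uniform bound for u on a compact set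
    have hsub0 : (closure Ω ∩ {y | Q y ≤ R^2}) ×ˢ Icc t1 t0 ⊆ closure Ω ×ˢ Ico 0 T := by
      rintro ⟨y, s⟩ ⟨⟨hy, _⟩, hs1, hs2⟩
      exact ⟨hy, ⟨by linarith only [ht1pos, hs1], by linarith only [hs2, ht0T]⟩⟩
    have hScpt : ∀ c : ℝ, IsCompact (closure Ω ∩ {y | Q y ≤ c}) := by
      intro c
      apply IsCompact.of_isClosed_subset (isCompact_closedBall x0 (Real.sqrt c))
      · exact isClosed_closure.inter (isClosed_le hQcont continuous_const)
      · intro y hy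
        rw [Metric.mem_closedBall, EuclideanSpace.dist_eq]
        have hdq : ∑ i, dist (y i) (x0 i) ^ 2 = Q y := by
          rw [hQQ]
          exact Finset.sum_congr rfl fun i _ => by rw [Real.dist_eq, sq_abs]
        rw [hdq]
        exact Real.sqrt_le_sqrt hy.2
    obtain ⟨M0, hM0⟩ :=
      ((hScpt (R^2)).prod isCompact_Icc).exists_bound_of_continuousOn (hcont.mono hsub0)
    set M : ℝ := max M0 0 with hM_def
    have hMnonneg : 0 ≤ M := le_max_right _ _
    have hM : ∀ y s, y ∈ closure Ω → Q y ≤ R^2 → s ∈ Icc t1 t0 → u y s ≤ M := by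
      intro y s hy hQy hs
      have h1 := hM0 (y, s) ⟨⟨hy, hQy⟩, hs⟩
      have h2 : |u y s| ≤ M0 := by simpa [Real.norm_eq_abs] using h1
      calc u y s ≤ |u y s| := le_abs_self _
      _ ≤ M0 := h2
      _ ≤ M := le_max_left _ _
    -- spatial boundary layer
    set η' : ℝ := min (R^2) ((A/(M+1)) ^ (1/γ)) with hη'_def
    have hη' : 0 < η' := lt_min (by positivity) (Real.rpow_pos_of_pos (by positivity) _)
    have hη'R : η' ≤ R^2 := min_le_left _ _
    have hUbig : ∀ b : ℝ, 0 < b → b ≤ η' → M + 1 ≤ A * b ^ (-γ) := by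
      intro b hb hbη
      have h1 : b ≤ (A/(M+1)) ^ (1/γ) := le_trans hbη (min_le_right _ _)
      have h2 : ((A/(M+1)) ^ (1/γ)) ^ (-γ) ≤ b ^ (-γ) :=
        Real.rpow_le_rpow_of_nonpos hb h1 (by linarith only [hγ])
      have h3 : ((A/(M+1)) ^ (1/γ)) ^ (-γ) = (M+1)/A := by
        rw [← Real.rpow_mul (by positivity : (0:ℝ) ≤ A/(M+1)),
          show (1/γ) * (-γ) = -1 by field_simp, Real.rpow_neg (by positivity), Real.rpow_one,
          inv_div]
      rw [h3] at h2
      calc M + 1 = A * ((M+1)/A) := by field_simp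
      _ ≤ A * b ^ (-γ) := mul_le_mul_of_nonneg_left h2 hA.le
    -- temporal boundary layer
    set θ : ℝ := (M+1) ^ (-(q-1)) with hθ_def
    have hθ : 0 < θ := Real.rpow_pos_of_pos (by positivity) _
    have hψbig : ∀ t, t1 < t → F t ≤ θ → M + 1 ≤ ψ t := by
      intro t ht hFt
      have h2 : θ ^ (-gp) ≤ F t ^ (-gp) :=
        Real.rpow_le_rpow_of_nonpos (hFpos t ht) hFt (by linarith only [hgp])
      have h3 : θ ^ (-gp) = M + 1 := by
        rw [hθ_def, ← Real.rpow_mul (by positivity : (0:ℝ) ≤ M+1),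
          show (-(q-1)) * (-gp) = 1 by linear_combination hgp1, Real.rpow_one]
      rw [hψψ]
      rw [h3] at h2
      exact h2
    have hFcont : ContinuousAt F t1 := by
      have h1 : ContinuousAt (fun t : ℝ => t ^ (α+1)) t1 :=
        Real.continuousAt_rpow_const _ _ (Or.inl (ne_of_gt ht1pos))
      rw [hF_def]
      exact continuousAt_const.mul (h1.sub continuousAt_const)
    have hFt1 : F t1 = 0 := by rw [hFF]; simp
    have hevF : ∀ᶠ t in 𝓝[>] t1, F t < θ := by
      have h := hFcont.tendsto
      rw [hFt1] at h
      exact (h.mono_left nhdsWithin_le_nhds).eventually_lt_const hθ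
    obtain ⟨t', hFt', ht'1, ht'0⟩ :=
      (hevF.and (Ioo_mem_nhdsGT_of_mem ⟨le_refl t1, ht1t0⟩)).exists
    -- the compact region and the maximum point
    set K : Set (EuclideanSpace ℝ (Fin N) × ℝ) :=
      (closure Ω ∩ {y | Q y ≤ R^2 - η'}) ×ˢ Icc t' t0 with hK_def
    have hKcpt : IsCompact K := (hScpt _).prod isCompact_Icc
    have hKne : (x0, t0) ∈ K :=
      ⟨⟨subset_closure hx0, by rw [mem_setOf_eq, hQ0]; linarith only [hη'R]⟩, ⟨ht'0.le, le_refl t0⟩⟩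
    have hWcont : ContinuousOn (fun p : EuclideanSpace ℝ (Fin N) × ℝ => w p.1 p.2) K := by
      have hfun : (fun p : EuclideanSpace ℝ (Fin N) × ℝ => w p.1 p.2)
          = fun p => u p.1 p.2 - ψ p.2 - U p.1 - ε * (p.2 - t1) := by
        funext p; rw [hww]
      rw [hfun]
      refine ContinuousOn.sub (ContinuousOn.sub (ContinuousOn.sub ?_ ?_) ?_) ?_
      · refine hcont.mono ?_
        rintro ⟨y, s⟩ ⟨⟨hy, _⟩, hs1, hs2⟩
        exact ⟨hy, ⟨by linarith only [ht1pos, ht'1, hs1], by linarith only [hs2, ht0T]⟩⟩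
      · intro p hp
        have ht1p : t1 < p.2 := lt_of_lt_of_le ht'1 hp.2.1
        exact ((hψd p.2 ht1p).continuousAt.comp continuous_snd.continuousAt).continuousWithinAt
      · intro p hp
        have hbp : R^2 - Q p.1 ≠ 0 := by
          have := hp.1.2
          have : Q p.1 ≤ R^2 - η' := this
          intro hzero; rw [sub_eq_zero] at hzero; rw [← hzero] at this; linarith only [this, hη']
        have h2 : ContinuousAt (fun p : EuclideanSpace ℝ (Fin N) × ℝ => R^2 - Q p.1) p :=
          (continuous_const.sub (hQcont.comp continuous_fst)).continuousAt
        have h3 : ContinuousAt (fun p : EuclideanSpace ℝ (Fin N) × ℝ => (R^2 - Q p.1) ^ (-γ)) p :=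
          h2.rpow_const (Or.inl hbp)
        have hUform : (fun p : EuclideanSpace ℝ (Fin N) × ℝ => U p.1)
            = fun p => A * (R^2 - Q p.1) ^ (-γ) := by funext p; rw [hUU]
        rw [hUform]
        exact (continuousAt_const.mul h3).continuousWithinAt
      · fun_prop
    obtain ⟨⟨xb, tb⟩, hpbarK, hpmax⟩ := hKcpt.exists_isMaxOn ⟨(x0,t0), hKne⟩ hWcont
    have hxbcl : xb ∈ closure Ω := hpbarK.1.1
    have hQxb : Q xb ≤ R^2 - η' := hpbarK.1.2
    have htb1 : t' ≤ tb := hpbarK.2.1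
    have htb0 : tb ≤ t0 := hpbarK.2.2
    have htbt1 : t1 < tb := lt_of_lt_of_le ht'1 htb1
    have htbpos : 0 < tb := ht1pos.trans htbt1
    have htbT : tb < T := lt_of_le_of_lt htb0 ht0T
    have hwmax : ∀ p ∈ K, w p.1 p.2 ≤ w xb tb := fun p hp => hpmax hp
    have hwb : 0 < w xb tb := lt_of_lt_of_le hw0 (hwmax (x0,t0) hKne)
    have hψtb : 0 < ψ tb := hψpos tb htbt1
    have hbase : 0 < R^2 - Q xb := by linarith only [hQxb, hη']
    have hUxb : 0 < U xb := by
      rw [hUU]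
      exact mul_pos hA (Real.rpow_pos_of_pos hbase _)
    have hεtb : 0 < ε * (tb - t1) := mul_pos hε (sub_pos.mpr htbt1)
    have hxbΩ : xb ∈ Ω := by
      have h := hxbcl
      rw [closure_eq_self_union_frontier] at h
      rcases h with h | h
      · exact h
      · exfalso
        have hu0 : u xb tb = 0 := hbdry xb h tb ⟨htbpos.le, htbT⟩
        have hmm := hwb
        rw [hww, hu0] at hmm
        linarith only [hmm, hψtb, hUxb, hεtb]
    have hQlt : Q xb < R^2 - η' := by
      rcases lt_or_eq_of_le hQxb with h | h
      · exact h
      · exfalso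
        have hUb : M + 1 ≤ U xb := by
          have h2 := hUbig η' hη' (le_refl _)
          rw [hUU]
          have h3 : R^2 - Q xb = η' := by rw [h]; ring
          rw [h3]
          exact h2
        have hu : u xb tb ≤ M := hM xb tb hxbcl (by linarith only [hQxb, hη']) ⟨htbt1.le, htb0⟩
        have hmm := hwb
        rw [hww] at hmm
        linarith only [hmm, hψtb, hUb, hu, hεtb]
    have ht'lt : t' < tb := by
      rcases lt_or_eq_of_le htb1 with h | h
      · exact h
      · exfalso
        have hψb : M + 1 ≤ ψ tb := hψbig tb htbt1 (by rw [← h]; exact hFt'.le)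
        have hu : u xb tb ≤ M := hM xb tb hxbcl (by linarith only [hQxb, hη']) ⟨htbt1.le, htb0⟩
        have hmm := hwb
        rw [hww] at hmm
        linarith only [hmm, hψb, hu, hUxb, hεtb]
    have hlocmax : IsLocalMax (fun y => w y tb) xb := by
      have hopen : IsOpen (Ω ∩ {y | Q y < R^2 - η'}) :=
        hΩ.inter (isOpen_lt hQcont continuous_const)
      have hxbmem : xb ∈ Ω ∩ {y | Q y < R^2 - η'} := ⟨hxbΩ, hQlt⟩
      filter_upwards [hopen.mem_nhds hxbmem] with y hy
      exact hwmax (y, tb) ⟨⟨subset_closure hy.1, (show Q y < R^2 - η' from hy.2).le⟩, ⟨htb1, htb0⟩⟩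
    have htmax : ∀ s ∈ Icc t' tb, w xb s ≤ w xb tb := fun s hs =>
      hwmax (xb, s) ⟨⟨hxbcl, hQxb⟩, ⟨hs.1, le_trans hs.2 htb0⟩⟩
    have hut : DifferentiableAt ℝ (u xb) tb := (hsmooth xb hxbΩ tb ⟨htbpos, htbT⟩).1
    have hWt : HasDerivAt (fun s => w xb s) (deriv (u xb) tb + tb ^ α * ψ tb ^ q - ε) tb := by
      have h1 := hut.hasDerivAt
      have h2 := hψd tb htbt1
      have h3 : HasDerivAt (fun s : ℝ => ε * (s - t1)) ε tb := by
        simpa using ((hasDerivAt_id tb).sub_const t1).const_mul ε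
      have h4 := ((h1.sub h2).sub_const (U xb)).sub h3
      have hfun : (fun s => w xb s) = fun s => u xb s - ψ s - U xb - ε * (s - t1) := by
        funext s; rw [hww]
      rw [hfun]
      refine h4.congr_deriv ?_
      ring
    have htime : 0 ≤ deriv (u xb) tb + tb ^ α * ψ tb ^ q - ε :=
      deriv_nonneg_of_max_right ht'lt htmax hWt
    -- spatial second derivatives
    set f : EuclideanSpace ℝ (Fin N) → ℝ := fun y => u y tb with hf_def
    have hff : ∀ y, f y = u y tb := fun y => by rw [hf_def]
    have hf2 : ContDiffAt ℝ 2 f xb := by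
      rw [hf_def]; exact (hsmooth xb hxbΩ tb ⟨htbpos, htbT⟩).2
    set cb : ℝ := R^2 - Q xb with hcb_def
    have hcb : 0 < cb := hbase
    have hkey : ∀ i : Fin N,
        iteratedFDeriv ℝ 2 f xb ![EuclideanSpace.single i 1, EuclideanSpace.single i 1]
          ≤ 2*A*γ*cb^(-γ-1) + 4*A*γ*(γ+1)*cb^(-γ-2)*(xb i - x0 i)^2 := by
      intro i
      set b : ℝ := xb i - x0 i with hb_def
      set v : EuclideanSpace ℝ (Fin N) := EuclideanSpace.single i 1 with hv_def
      obtain ⟨g1, hg1ev, hg1d⟩ := dir_second_deriv hf2 v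
      have hQline : ∀ s : ℝ, Q (xb + s • v) = Q xb + 2*b*s + s^2 := by
        intro s
        rw [hQQ, hQQ]
        have hterm : ∀ j : Fin N, ((xb + s • v) j - x0 j)^2
            = (xb j - x0 j)^2 + (if j = i then 2*b*s + s^2 else 0) := by
          intro j
          have happ : (xb + s • v) j = xb j + s * (if j = i then (1:ℝ) else 0) := by
            rw [hv_def]
            simp [PiLp.add_apply, PiLp.smul_apply, EuclideanSpace.single_apply, smul_eq_mul]
          rw [happ]
          by_cases hji : j = i
          · subst hji; rw [hb_def]; simp; ring
          · simp [hji]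
        rw [Finset.sum_congr rfl fun j _ => hterm j, Finset.sum_add_distrib,
          Finset.sum_ite_eq' Finset.univ i (fun _ => 2*b*s + s^2)]
        simp only [Finset.mem_univ, if_true]
        ring
      set P : ℝ → ℝ := fun s => cb - 2*b*s - s^2 with hP_def
      have hPP : ∀ s, P s = cb - 2*b*s - s^2 := fun s => by rw [hP_def]
      have hPline : ∀ s : ℝ, R^2 - Q (xb + s • v) = P s := by
        intro s; rw [hQline s, hPP, hcb_def]; ring
      have hP0 : P 0 = cb := by rw [hPP]; ring
      have hPc : ContinuousAt P 0 := by rw [hP_def]; fun_prop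
      have hPev : ∀ᶠ s in 𝓝 (0:ℝ), 0 < P s := by
        have h := hPc.tendsto
        rw [hP0] at h
        exact h.eventually_const_lt hcb
      have hPd : ∀ s : ℝ, HasDerivAt P (-(2*b) - 2*s) s := by
        intro s
        rw [hP_def]
        have h1 := (hasDerivAt_id s).const_mul (2*b)
        have h2 := hasDerivAt_pow 2 s
        have h3 := (((hasDerivAt_const s cb).sub h1).sub h2)
        refine h3.congr_deriv ?_
        simp
      set F1 : ℝ → ℝ := fun s => A * ((-(2*b) - 2*s) * -γ * P s ^ (-γ - 1)) with hF1_def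
      have hFev : ∀ᶠ s in 𝓝 (0:ℝ), HasDerivAt (fun r => A * P r ^ (-γ)) (F1 s) s := by
        filter_upwards [hPev] with s hs
        have h := ((hPd s).rpow_const (p := -γ) (Or.inl hs.ne')).const_mul A
        have hfun : F1 = fun s => A * ((-(2*b) - 2*s) * -γ * P s ^ (-γ - 1)) := hF1_def
        rw [hfun]
        exact h
      set d2 : ℝ := A * ((-2) * -γ * cb ^ (-γ-1)
        + (-(2*b) - 2*0) * -γ * ((-(2*b) - 2*0) * (-γ-1) * cb ^ (-γ-1-1))) with hd2_def
      have hF1d : HasDerivAt F1 d2 0 := by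
        have hG : HasDerivAt (fun s : ℝ => -(2*b) - 2*s) (-2) 0 := by
          simpa using ((hasDerivAt_id (0:ℝ)).const_mul 2).const_sub (-(2*b))
        have hH : HasDerivAt (fun s : ℝ => P s ^ (-γ - 1))
            ((-(2*b) - 2*0) * (-γ-1) * P 0 ^ (-γ-1-1)) 0 :=
          (hPd 0).rpow_const (Or.inl (by rw [hP0]; exact hcb.ne'))
        have hfun : F1 = fun s => A * ((-(2*b) - 2*s) * -γ * P s ^ (-γ - 1)) := hF1_def
        rw [hfun, hd2_def]
        have h := ((hG.mul_const (-γ)).mul hH).const_mul A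
        refine h.congr_deriv ?_
        rw [hP0]
      have hloc : IsLocalMax (fun s : ℝ => f (xb + s • v) - A * P s ^ (-γ)) 0 := by
        have hmc : ContinuousAt (fun s : ℝ => xb + s • v) 0 := by fun_prop
        have hm2 : Tendsto (fun s : ℝ => xb + s • v) (𝓝 0) (𝓝 xb) := by
          have h := hmc.tendsto
          simpa using h
        filter_upwards [hm2.eventually hlocmax] with s hs
        have e1 : U (xb + s • v) = A * P s ^ (-γ) := by rw [hUU, hPline]
        have e2 : U xb = A * P 0 ^ (-γ) := by rw [hUU, hP0, ← hcb_def]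
        have d1 := hww (xb + s • v) tb
        have d0 := hww xb tb
        have hfx : f (xb + s • v) = u (xb + s • v) tb := hff _
        have hz : xb + (0:ℝ) • v = xb := by simp
        rw [hz, hfx, hff xb, ← e1, ← e2]
        rw [d1, d0] at hs
        linarith only [hs]
      have hhev : ∀ᶠ s in 𝓝 (0:ℝ),
          HasDerivAt (fun r => f (xb + r • v) - A * P r ^ (-γ)) (g1 s - F1 s) s := by
        filter_upwards [hg1ev, hFev] with s h1 h2
        exact h1.sub h2
      have htest := second_deriv_test hloc hhev (hg1d.sub hF1d)
      have hexp : d2 = 2*A*γ*cb^(-γ-1) + 4*A*γ*(γ+1)*cb^(-γ-2)*b^2 := by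
        rw [hd2_def, show (-γ-1-1 : ℝ) = -γ-2 by ring]
        ring
      rw [← hexp]
      linarith only [htest]
    -- summing up
    have hlapineq : lap f xb ≤ (N:ℝ) * (2*A*γ*cb^(-γ-1)) + 4*A*γ*(γ+1)*cb^(-γ-2) * Q xb := by
      have h1 : lap f xb = ∑ i : Fin N, iteratedFDeriv ℝ 2 f xb
          ![EuclideanSpace.single i 1, EuclideanSpace.single i 1] := rfl
      rw [h1]
      calc (∑ i : Fin N, iteratedFDeriv ℝ 2 f xb
          ![EuclideanSpace.single i 1, EuclideanSpace.single i 1])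
          ≤ ∑ i : Fin N, (2*A*γ*cb^(-γ-1) + 4*A*γ*(γ+1)*cb^(-γ-2)*(xb i - x0 i)^2) :=
            Finset.sum_le_sum fun i _ => hkey i
      _ = (N:ℝ) * (2*A*γ*cb^(-γ-1)) + 4*A*γ*(γ+1)*cb^(-γ-2) * Q xb := by
          rw [Finset.sum_add_distrib, Finset.sum_const, Finset.card_univ, ← Finset.mul_sum,
            hQQ]
          simp [nsmul_eq_mul]
    have hA2 : C * A * R^2 = m * A ^ q := by
      have h1 : A ^ q = A ^ (q-1) * A := by
        rw [← Real.rpow_add_one hA.ne' (q-1), show q - 1 + 1 = q by ring]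
      rw [h1, hApow]
      field_simp
    have hUq : U xb ^ q = A ^ q * cb ^ (-γ-2) := by
      rw [hUU, ← hcb_def, Real.mul_rpow hA.le (Real.rpow_nonneg hcb.le _),
        ← Real.rpow_mul hcb.le, show -γ * q = -γ-2 by linear_combination (-1 : ℝ) * hγq]
    have hmle : m ≤ tb ^ α := by
      rcases le_or_gt 0 α with h | h
      · calc m ≤ t1 ^ α := min_le_left _ _
        _ ≤ tb ^ α := Real.rpow_le_rpow ht1pos.le htbt1.le h
      · calc m ≤ t0 ^ α := min_le_right _ _
        _ ≤ tb ^ α := Real.rpow_le_rpow_of_nonpos htbpos htb0 h.le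
    have hlap2 : lap f xb ≤ tb ^ α * U xb ^ q := by
      have hcb2 : (0:ℝ) < cb ^ (-γ-2) := Real.rpow_pos_of_pos hcb _
      have e1 : cb ^ (-γ-1) = cb ^ (-γ-2) * cb := by
        rw [show (-γ-1 : ℝ) = (-γ-2) + 1 by ring, Real.rpow_add_one hcb.ne']
      have hQb : 0 ≤ Q xb := hQnonneg xb
      have hQbR : Q xb ≤ R^2 := by linarith only [hQlt, hη']
      have hcbR : cb ≤ R^2 := by rw [hcb_def]; linarith only [hQb]
      have h2 : (N:ℝ)*(2*A*γ*cb) + 4*A*γ*(γ+1)*(Q xb) ≤ C*A*R^2 := by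
        have e4 : (0:ℝ) ≤ 4*A*γ*(γ+1) := by positivity
        have em1 : 2*A*γ*cb ≤ 2*A*γ*R^2 := mul_le_mul_of_nonneg_left hcbR (by positivity)
        have em2 : (N:ℝ) * (2*A*γ*cb) ≤ (N:ℝ) * (2*A*γ*R^2) :=
          mul_le_mul_of_nonneg_left em1 (Nat.cast_nonneg N)
        have em3 : 4*A*γ*(γ+1)*(Q xb) ≤ 4*A*γ*(γ+1)*R^2 :=
          mul_le_mul_of_nonneg_left hQbR e4
        calc (N:ℝ)*(2*A*γ*cb) + 4*A*γ*(γ+1)*(Q xb)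
            ≤ (N:ℝ)*(2*A*γ*R^2) + 4*A*γ*(γ+1)*R^2 := add_le_add em2 em3
        _ = C*A*R^2 := by rw [hC_def]; ring
      calc lap f xb ≤ (N:ℝ) * (2*A*γ*cb^(-γ-1)) + 4*A*γ*(γ+1)*cb^(-γ-2) * Q xb := hlapineq
      _ = ((N:ℝ)*(2*A*γ*cb) + 4*A*γ*(γ+1)*(Q xb)) * cb^(-γ-2) := by rw [e1]; ring
      _ ≤ (C*A*R^2) * cb^(-γ-2) := mul_le_mul_of_nonneg_right h2 hcb2.le
      _ = m * A ^ q * cb^(-γ-2) := by rw [hA2]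
      _ = m * U xb ^ q := by rw [hUq]; ring
      _ ≤ tb ^ α * U xb ^ q := by
          have h5 : (0:ℝ) ≤ U xb ^ q := Real.rpow_nonneg hUxb.le _
          exact mul_le_mul_of_nonneg_right hmle h5
    -- conclusion
    have hsol' := hsol xb hxbΩ tb ⟨htbpos, htbT⟩
    rw [← hf_def] at hsol'
    have hwbpos := hwb
    rw [hww] at hwbpos
    have huge : ψ tb + U xb ≤ u xb tb := by linarith only [hwbpos, hεtb]
    have h4 : ψ tb ^ q + U xb ^ q ≤ u xb tb ^ q := by
      calc ψ tb ^ q + U xb ^ q ≤ (ψ tb + U xb) ^ q :=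
            rpow_add_le_add_rpow hψtb.le hUxb.le hq.le
      _ ≤ u xb tb ^ q := Real.rpow_le_rpow (by linarith only [hψtb, hUxb]) huge (by linarith only [hq])
    have htα : 0 ≤ tb ^ α := (Real.rpow_pos_of_pos htbpos α).le
    have hmul : tb^α * (ψ tb ^ q + U xb ^ q) ≤ tb^α * u xb tb ^ q :=
      mul_le_mul_of_nonneg_left h4 htα
    have hmadd : tb^α * (ψ tb ^ q + U xb ^ q) = tb^α * ψ tb ^ q + tb^α * U xb ^ q := by ring
    linarith only [htime, hsol', hlap2, hmul, hmadd, hε]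
  -- Final limiting argument
  refine le_of_forall_pos_le_add fun δ hδ => ?_
  have hTend : Tendsto (fun t1 : ℝ => (κ * (t0 ^ (α+1) - t1 ^ (α+1))) ^ (-gp)) (𝓝[>] 0)
      (𝓝 ((κ * (t0 ^ (α+1) - 0)) ^ (-gp))) := by
    have h1 : Tendsto (fun t1 : ℝ => t1 ^ (α+1)) (𝓝[>] (0:ℝ)) (𝓝 0) := by
      have hc : ContinuousAt (fun t1 : ℝ => t1 ^ (α+1)) 0 :=
        Real.continuousAt_rpow_const 0 (α+1) (Or.inr (by linarith))
      have h := hc.tendsto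
      rw [Real.zero_rpow (by linarith : α+1 ≠ 0)] at h
      exact h.mono_left nhdsWithin_le_nhds
    have h2 : ContinuousAt (fun z : ℝ => (κ * (t0 ^ (α+1) - z)) ^ (-gp)) 0 := by
      have hb : κ * (t0 ^ (α+1) - 0) ≠ 0 := by
        have h3 : (0:ℝ) < t0 ^ (α+1) := Real.rpow_pos_of_pos ht0pos _
        rw [sub_zero]; positivity
      exact ContinuousAt.rpow_const (by fun_prop) (Or.inl hb)
    exact h2.tendsto.comp h1
  have hLeq : (κ * (t0 ^ (α+1) - 0)) ^ (-gp)
      = ((α + 1) / (q - 1)) ^ (1 / (q - 1)) * t0 ^ (-(α + 1) / (q - 1)) := by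
    rw [sub_zero, Real.mul_rpow hκ.le (Real.rpow_pos_of_pos ht0pos _).le]
    congr 1
    · rw [Real.rpow_neg hκ.le, ← Real.inv_rpow hκ.le]
      rw [hκ_def, inv_div, hgp_def]
    · rw [← Real.rpow_mul ht0pos.le]
      congr 1
      rw [hgp_def]; ring
  obtain ⟨t1, ht1a, ht1b⟩ :=
    ((hTend.eventually_lt_const (show (κ * (t0 ^ (α+1) - 0)) ^ (-gp)
        < ((α + 1) / (q - 1)) ^ (1 / (q - 1)) * t0 ^ (-(α + 1) / (q - 1)) + δ/3 by
          rw [hLeq]; linarith only [hδ])).and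
      (Ioo_mem_nhdsGT_of_mem ⟨le_refl (0:ℝ), ht0pos⟩)).exists
  obtain ⟨ht1pos, ht1t0⟩ := ht1b
  set m : ℝ := min (t1 ^ α) (t0 ^ α) with hm_def
  have hm : 0 < m := lt_min (Real.rpow_pos_of_pos ht1pos α) (Real.rpow_pos_of_pos ht0pos α)
  set dq : ℝ := (δ/3) ^ (q-1) with hdq_def
  have hdq : 0 < dq := Real.rpow_pos_of_pos (by linarith only [hδ]) _
  set s0 : ℝ := C / (m * dq) with hs0_def
  set R : ℝ := Real.sqrt (max 1 s0) with hR_def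
  have hmax0 : (0:ℝ) ≤ max 1 s0 := le_trans zero_le_one (le_max_left _ _)
  have hR : 0 < R := Real.sqrt_pos.mpr (lt_of_lt_of_le one_pos (le_max_left _ _))
  have hR2 : R^2 = max 1 s0 := Real.sq_sqrt hmax0
  have hR2pos : (0:ℝ) < R^2 := by positivity
  set ε : ℝ := δ/(3*t0) with hε_def
  have hε : 0 < ε := by positivity
  have hclaim := claim t1 ht1pos ht1t0 R hR ε hε
  -- bound the U-term
  have hEq : (C * R^2 / m) ^ gp * (R^2) ^ (-γ) = (C/(m*R^2)) ^ gp := by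
    have e0 : C * R^2 / m = (C/m) * R^2 := by ring
    rw [e0, Real.mul_rpow (by positivity) (by positivity), mul_assoc, ← Real.rpow_add hR2pos,
      show gp + -γ = -gp by rw [hgp_def, hγ_def]; ring,
      Real.rpow_neg hR2pos.le, ← Real.inv_rpow hR2pos.le,
      ← Real.mul_rpow (by positivity) (by positivity)]
    congr 1
    field_simp
  have hble : C/(m*R^2) ≤ dq := by
    have h' : s0 ≤ R^2 := hR2 ▸ le_max_right _ _
    have h'' : C ≤ R^2 * (m*dq) := by
      rw [hs0_def] at h'
      exact (div_le_iff₀ (by positivity)).mp h'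
    rw [div_le_iff₀ (by positivity)]
    calc C ≤ R^2 * (m*dq) := h''
    _ = dq * (m*R^2) := by ring
  have hUv : (C * R^2 / m) ^ gp * (R^2) ^ (-γ) ≤ δ/3 := by
    rw [hEq]
    calc (C/(m*R^2)) ^ gp ≤ dq ^ gp := Real.rpow_le_rpow (by positivity) hble hgp.le
    _ = δ/3 := by
        rw [hdq_def, ← Real.rpow_mul (by positivity : (0:ℝ) ≤ δ/3),
          show (q-1)*gp = 1 by rw [hgp_def]; field_simp, Real.rpow_one]
  have hεv : ε * (t0 - t1) ≤ δ/3 := by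
    have h1 : ε * (t0 - t1) ≤ ε * t0 := mul_le_mul_of_nonneg_left (by linarith only [ht1pos]) hε.le
    have h2 : ε * t0 = δ/3 := by rw [hε_def]; field_simp
    linarith only [h1, h2]
  calc u x0 t0 ≤ (κ * (t0 ^ (α+1) - t1 ^ (α+1))) ^ (-gp)
        + ((C * R^2 / m) ^ gp) * (R^2) ^ (-γ) + ε * (t0 - t1) := hclaim
  _ ≤ (((α + 1) / (q - 1)) ^ (1 / (q - 1)) * t0 ^ (-(α + 1) / (q - 1)) + δ/3) + δ/3 + δ/3 := by
      have h1 := ht1a.le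
      linarith only [h1, hUv, hεv]
  _ = ((α + 1) / (q - 1)) ^ (1 / (q - 1)) * t0 ^ (-(α + 1) / (q - 1)) + δ := by ring
end

section
/- Let $h : [0,\infty) \to [0,\infty)$ be continuous, nondecreasing, with $h(0) \ge 0$, and super-additive, i.e. $h(a+b) \ge h(a) + h(b)$ for all $a, b \ge 0$. If $h$ satisfies the Keller–Osserman condition, i.e. there exists $a \ge 0$ with $\int_a^\infty \frac{ds}{\sqrt{H(s)}} < \infty$ where $H(s) = \int_0^s h(\tau) d\tau$, and $h$ is eventually positive, then $\int_a^\infty \frac{ds}{h(s)} < \infty$ for $a$ large enough. -/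
open MeasureTheory Set

/-- A continuous nondecreasing nonnegative super-additive function `h` satisfying the
Keller–Osserman condition `∫_a^∞ ds/√H(s) < ∞` (with `H(s) = ∫_0^s h`), and eventually
positive, satisfies `∫_a^∞ ds/h(s) < ∞` for `a` large enough. -/
theorem keller_osserman_superadditive
    (h : ℝ → ℝ)
    (hcont : ContinuousOn h (Set.Ici 0))
    (hmono : MonotoneOn h (Set.Ici 0))
    (hnonneg : ∀ s : ℝ, 0 ≤ s → 0 ≤ h s)
    (hsuper : ∀ a b : ℝ, 0 ≤ a → 0 ≤ b → h a + h b ≤ h (a + b))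
    (H : ℝ → ℝ) (hH : ∀ s : ℝ, H s = ∫ τ in (0 : ℝ)..s, h τ)
    (hKO : ∃ a : ℝ, 0 ≤ a ∧ IntegrableOn (fun s => 1 / Real.sqrt (H s)) (Set.Ici a))
    (hpos : ∃ s₀ : ℝ, ∀ s : ℝ, s₀ ≤ s → 0 < h s) :
    ∃ a : ℝ, IntegrableOn (fun s => 1 / h s) (Set.Ici a) := by
  obtain ⟨a, ha0, hKOa⟩ := hKO
  obtain ⟨s₀, hs₀⟩ := hpos
  set t : ℝ := max s₀ 1 with ht_def
  have ht1 : (1:ℝ) ≤ t := le_max_right _ _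
  have ht0 : (0:ℝ) < t := lt_of_lt_of_le one_pos ht1
  have hht : 0 < h t := hs₀ t (le_max_left _ _)
  have h00 : h 0 = 0 := by
    have h1 := hsuper 0 0 le_rfl le_rfl
    have h2 := hnonneg 0 le_rfl
    simp at h1
    linarith
  set c : ℝ := h t / (2 * t) with hc_def
  have hc0 : 0 < c := div_pos hht (by linarith)
  -- multiples
  have hmul : ∀ n : ℕ, (n : ℝ) * h t ≤ h ((n : ℝ) * t) := by
    intro n
    induction n with
    | zero => simp [h00]
    | succ n ih =>
      have hnt : (0:ℝ) ≤ (n:ℝ) * t := by positivity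
      have hsup := hsuper ((n:ℝ) * t) t hnt ht0.le
      have heq : ((n:ℝ) + 1) * t = (n:ℝ) * t + t := by ring
      push_cast
      rw [heq]
      calc ((n:ℝ) + 1) * h t = (n:ℝ) * h t + h t := by ring
        _ ≤ h ((n:ℝ) * t) + h t := by linarith
        _ ≤ h ((n:ℝ) * t + t) := hsup
  -- linear lower bound
  have hlin : ∀ s : ℝ, 2 * t ≤ s → c * s ≤ h s := by
    intro s hs
    have hs0 : (0:ℝ) ≤ s := by linarith
    set n : ℕ := ⌊s / t⌋₊ with hn_def
    have hst : (2:ℝ) ≤ s / t := (le_div_iff₀ ht0).mpr (by linarith)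
    have hn_le : (n : ℝ) ≤ s / t := Nat.floor_le (by positivity)
    have hn_ge : s / t - 1 ≤ (n : ℝ) := by
      have := Nat.sub_one_lt_floor (s / t)
      linarith
    have hnt_le_s : (n:ℝ) * t ≤ s := by
      rw [← le_div_iff₀ ht0]; exact hn_le
    have hnt0 : (0:ℝ) ≤ (n:ℝ) * t := by positivity
    have hmono' : h ((n:ℝ) * t) ≤ h s := hmono hnt0 hs0 hnt_le_s
    have hct : c * (2*t) = h t := div_mul_cancel₀ _ (by positivity)
    have hu : (s/t) * t = s := div_mul_cancel₀ s ht0.ne'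
    have key : c * s ≤ (s/t - 1) * h t := by
      nlinarith [mul_nonneg (mul_pos hc0 ht0).le (sub_nonneg.mpr hst)]
    calc c * s ≤ (s/t - 1) * h t := key
      _ ≤ (n:ℝ) * h t := mul_le_mul_of_nonneg_right hn_ge hht.le
      _ ≤ h ((n:ℝ) * t) := hmul n
      _ ≤ h s := hmono'
  -- interval integrability of h on subintervals of [0,∞)
  have hint : ∀ u v : ℝ, 0 ≤ u → u ≤ v → IntervalIntegrable h volume u v := by
    intro u v hu huv
    apply ContinuousOn.intervalIntegrable
    apply hcont.mono
    rw [Set.uIcc_of_le huv]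
    intro x hx
    exact le_trans hu hx.1
  -- upper bound on H
  have hHub : ∀ s : ℝ, 0 ≤ s → H s ≤ s * h s := by
    intro s hs0
    rw [hH]
    have := intervalIntegral.integral_mono_on hs0 (hint 0 s le_rfl hs0)
      (intervalIntegrable_const (c := h s)) (fun x hx => hmono hx.1 hs0 hx.2)
    simpa using this
  -- lower bound on H
  have hHpos : ∀ s : ℝ, 2 * t ≤ s → 0 < H s := by
    intro s hs
    have hs0 : (0:ℝ) ≤ s := by linarith
    have hts : t ≤ s := by linarith
    have hsplit : (∫ τ in (0:ℝ)..t, h τ) + (∫ τ in t..s, h τ) = ∫ τ in (0:ℝ)..s, h τ :=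
      intervalIntegral.integral_add_adjacent_intervals (hint 0 t le_rfl ht0.le)
        (hint t s ht0.le hts)
    have h1 : 0 ≤ ∫ τ in (0:ℝ)..t, h τ :=
      intervalIntegral.integral_nonneg ht0.le (fun x hx => hnonneg x hx.1)
    have h2 : (s - t) * h t ≤ ∫ τ in t..s, h τ := by
      have := intervalIntegral.integral_mono_on hts
        (intervalIntegrable_const (c := h t)) (hint t s ht0.le hts)
        (fun x hx => hmono (le_of_lt ht0) (le_trans ht0.le hx.1) hx.1)
      simpa using this
    have h3 : 0 < (s - t) * h t := mul_pos (by linarith) hht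
    rw [hH]
    linarith
  -- choose the threshold
  set A : ℝ := max a (2 * t) with hA_def
  have hA2t : 2 * t ≤ A := le_max_right _ _
  refine ⟨A, ?_⟩
  have hApos : 0 < A := by linarith
  -- positivity of h on [A, ∞)
  have hhpos : ∀ s : ℝ, A ≤ s → 0 < h s := by
    intro s hs
    have h2t : 2 * t ≤ s := le_trans hA2t hs
    have := hlin s h2t
    nlinarith [hc0]
  -- majorant integrable
  have hKOA : IntegrableOn (fun s => 1 / Real.sqrt (H s)) (Set.Ici A) :=
    hKOa.mono_set (Set.Ici_subset_Ici.mpr (le_max_left _ _))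
  have hmaj : IntegrableOn (fun s => (1 / Real.sqrt c) * (1 / Real.sqrt (H s))) (Set.Ici A) :=
    hKOA.const_mul _
  -- continuity and measurability of 1/h on [A,∞)
  have hmeas : AEStronglyMeasurable (fun s => 1 / h s) (volume.restrict (Set.Ici A)) := by
    have hcA : ContinuousOn (fun s => 1 / h s) (Set.Ici A) := by
      apply ContinuousOn.div continuousOn_const
      · exact hcont.mono (fun x hx => le_trans hApos.le hx)
      · intro x hx
        exact (hhpos x hx).ne'
    exact hcA.aestronglyMeasurable measurableSet_Ici
  -- the comparison
  apply Integrable.mono hmaj hmeas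
  rw [ae_restrict_iff' measurableSet_Ici]
  apply Filter.Eventually.of_forall
  intro s hs
  have h2t : 2 * t ≤ s := le_trans hA2t hs
  have hs0 : (0:ℝ) ≤ s := by linarith
  have hhs : 0 < h s := hhpos s hs
  have hHp : 0 < H s := hHpos s h2t
  have hcs : c * s ≤ h s := hlin s h2t
  have hub : H s ≤ s * h s := hHub s hs0
  have hkey : c * H s ≤ h s ^ 2 := by nlinarith
  have hsqrt : Real.sqrt (c * H s) ≤ h s := by
    rw [show h s = Real.sqrt ((h s)^2) by rw [Real.sqrt_sq hhs.le]]
    exact Real.sqrt_le_sqrt hkey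
  have hsqp : 0 < Real.sqrt (c * H s) := Real.sqrt_pos.mpr (mul_pos hc0 hHp)
  have hfinal : 1 / h s ≤ (1 / Real.sqrt c) * (1 / Real.sqrt (H s)) := by
    have heq : (1 / Real.sqrt c) * (1 / Real.sqrt (H s)) = 1 / Real.sqrt (c * H s) := by
      rw [Real.sqrt_mul hc0.le, one_div_mul_one_div]
    rw [heq]
    exact one_div_le_one_div_of_le hsqp hsqrt
  rw [Real.norm_of_nonneg (by positivity), Real.norm_of_nonneg (by positivity)]
  exact hfinal
end

section
/- Let $q > 1$, $0 < \beta < 1$, and let $\overline u \ge \underline u > 0$ be two positive solutions of $\partial_t u - \Delta u + t^\alpha u^q = 0$ ($\alpha > -1$) in an open cylinder $Q$. Then $\tilde u := \underline u - \beta(\overline u - \underline u)$, wherever it is positive, is a supersolution: $\partial_t \tilde u - \Delta \tilde u + t^\alpha \tilde u^q \ge 0$ on $\{\tilde u > 0\} \cap Q$. -/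
open Set

lemma lap_comb {N : ℕ} (f g : EuclideanSpace ℝ (Fin N) → ℝ) (x : EuclideanSpace ℝ (Fin N))
    (a b : ℝ) (hf : ContDiffAt ℝ 2 f x) (hg : ContDiffAt ℝ 2 g x) :
    lap (fun y => a * f y + b * g y) x = a * lap f x + b * lap g x := by
  obtain ⟨s, hs, hfs⟩ := hf.contDiffOn le_rfl (by simp)
  obtain ⟨t, ht, hgt⟩ := hg.contDiffOn le_rfl (by simp)
  set U := interior (s ∩ t) with hU
  have hUo : IsOpen U := isOpen_interior
  have hxU : x ∈ U := mem_interior_iff_mem_nhds.2 (Filter.inter_mem hs ht)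
  have hfU : ContDiffOn ℝ 2 f U := hfs.mono (interior_subset.trans inter_subset_left)
  have hgU : ContDiffOn ℝ 2 g U := hgt.mono (interior_subset.trans inter_subset_right)
  have hud : UniqueDiffOn ℝ U := hUo.uniqueDiffOn
  have key : iteratedFDeriv ℝ 2 (fun y => a * f y + b * g y) x
      = a • iteratedFDeriv ℝ 2 f x + b • iteratedFDeriv ℝ 2 g x := by
    have e1 : (fun y => a * f y + b * g y) = (a • f + b • g) := by
      funext y; simp [smul_eq_mul]
    rw [e1, ← iteratedFDerivWithin_of_isOpen 2 hUo hxU,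
      iteratedFDerivWithin_add_apply (f := a • f) (g := b • g) ((hfU.const_smul a) x hxU)
        ((hgU.const_smul b) x hxU) hud hxU,
      iteratedFDerivWithin_const_smul_apply (hfU x hxU) hud hxU,
      iteratedFDerivWithin_const_smul_apply (hgU x hxU) hud hxU,
      iteratedFDerivWithin_of_isOpen 2 hUo hxU,
      iteratedFDerivWithin_of_isOpen 2 hUo hxU]
  simp only [lap, key, ContinuousMultilinearMap.add_apply, ContinuousMultilinearMap.smul_apply,
    smul_eq_mul, Finset.sum_add_distrib, Finset.mul_sum]

/-- If `ū ≥ u > 0` are two solutions of `∂ₜu - Δu + t^α u^q = 0` in an open cylinder `Q` and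
`0 < β < 1`, then `ũ = u - β(ū - u)` is a supersolution wherever it is positive. -/
theorem convex_combination_supersolution
    (N : ℕ) (α q β : ℝ) (hα : -1 < α) (hq : 1 < q) (hβ0 : 0 < β) (hβ1 : β < 1)
    (Q : Set (EuclideanSpace ℝ (Fin N) × ℝ)) (hQo : IsOpen Q)
    (hQt : ∀ p ∈ Q, 0 < p.2)
    (ubar u : EuclideanSpace ℝ (Fin N) → ℝ → ℝ)
    (hord : ∀ x t, (x, t) ∈ Q → 0 < u x t ∧ u x t ≤ ubar x t)
    (hsmooth : ∀ x t, (x, t) ∈ Q →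
      (DifferentiableAt ℝ (u x) t ∧ ContDiffAt ℝ 2 (fun y => u y t) x) ∧
      (DifferentiableAt ℝ (ubar x) t ∧ ContDiffAt ℝ 2 (fun y => ubar y t) x))
    (hsolu : ∀ x t, (x, t) ∈ Q →
      deriv (u x) t - lap (fun y => u y t) x + t ^ α * u x t ^ q = 0)
    (hsolubar : ∀ x t, (x, t) ∈ Q →
      deriv (ubar x) t - lap (fun y => ubar y t) x + t ^ α * ubar x t ^ q = 0) :
    ∀ x t, (x, t) ∈ Q → 0 < u x t - β * (ubar x t - u x t) →
      0 ≤ deriv (fun s => u x s - β * (ubar x s - u x s)) t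
          - lap (fun y => u y t - β * (ubar y t - u y t)) x
          + t ^ α * (u x t - β * (ubar x t - u x t)) ^ q := by
  intro x t hmem hpos
  obtain ⟨⟨hut, hux⟩, ⟨hubt, hubx⟩⟩ := hsmooth x t hmem
  obtain ⟨hu0, hord'⟩ := hord x t hmem
  have ht0 : 0 < t := hQt (x, t) hmem
  set A := u x t with hA
  set B := ubar x t with hB
  set w := A - β * (B - A) with hw
  -- time derivative
  have hd : deriv (fun s => u x s - β * (ubar x s - u x s)) t
      = deriv (u x) t - β * (deriv (ubar x) t - deriv (u x) t) := by
    exact (hut.hasDerivAt.sub (((hubt.hasDerivAt.sub hut.hasDerivAt)).const_mul β)).deriv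
  -- laplacian
  have hl : lap (fun y => u y t - β * (ubar y t - u y t)) x
      = lap (fun y => u y t) x - β * (lap (fun y => ubar y t) x - lap (fun y => u y t) x) := by
    have e1 : (fun y => u y t - β * (ubar y t - u y t))
        = fun y => (1 + β) * u y t + (-β) * ubar y t := by funext y; ring
    rw [e1, lap_comb _ _ _ _ _ hux hubx]; ring
  -- convexity inequality
  have hB0 : (0:ℝ) ≤ B := hu0.le.trans hord'
  have hw0 : (0:ℝ) ≤ w := hpos.le
  have hconv : (1 + β) * A ^ q ≤ w ^ q + β * B ^ q := by
    have h1β : (0:ℝ) < 1 + β := by linarith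
    have := (convexOn_rpow hq.le).2 (mem_Ici.2 hw0) (mem_Ici.2 hB0)
      (le_of_lt (by positivity : (0:ℝ) < 1 / (1 + β)))
      (le_of_lt (by positivity : (0:ℝ) < β / (1 + β)))
      (by field_simp)
    have hcomb : (1 / (1 + β)) • w + (β / (1 + β)) • B = A := by
      simp only [smul_eq_mul, hw]; field_simp; ring
    rw [hcomb] at this
    simp only [smul_eq_mul] at this
    have := mul_le_mul_of_nonneg_left this h1β.le
    calc (1 + β) * A ^ q ≤ (1 + β) * (1 / (1 + β) * w ^ q + β / (1 + β) * B ^ q) := this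
      _ = w ^ q + β * B ^ q := by field_simp
  have htα : (0:ℝ) < t ^ α := Real.rpow_pos_of_pos ht0 α
  have h1 := hsolu x t hmem
  have h2 := hsolubar x t hmem
  rw [hd, hl]
  have key : 0 ≤ t ^ α * (w ^ q + β * B ^ q - (1 + β) * A ^ q) :=
    mul_nonneg htα.le (by linarith)
  nlinarith [key]
end
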